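/- Let X = (X_1,…,X_d) be a random vector on a probability space. Then X is positive lower orthant dependent if and only if for every choice of bounded measurable nonincreasing functions f_i : ℝ → [0,∞), i = 1,…,d, one has E(∏_{i=1}^d f_i(X_i)) ≥ ∏_{i=1}^d E f_i(X_i). -/

import Mathlib

open MeasureTheory Set

/-- Any nonempty lower set in `ℝ` is an increasing union of `Iic`s. -/
lemma lowerSet_eq_iUnion_Iic {A : Set ℝ} (hA : IsLowerSet A) (hne : A.Nonempty) :
    ∃ t : ℕ → ℝ, Monotone t ∧ A = ⋃ n, Set.Iic (t n) := by
  by_cases hb : BddAbove A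
  · set c := sSup A with hc
    by_cases hcA : c ∈ A
    · refine ⟨fun _ => c, monotone_const, ?_⟩
      rw [Set.iUnion_const]
      ext x
      exact ⟨fun hx => le_csSup hb hx, fun hx => hA hx hcA⟩
    · refine ⟨fun n => c - 1 / (n + 1), ?_, ?_⟩
      · intro n m hnm
        have h1 : (0:ℝ) < n + 1 := by positivity
        have h2 : (n:ℝ) + 1 ≤ m + 1 := by
          have : (n:ℝ) ≤ m := Nat.cast_le.mpr hnm
          linarith
        have := one_div_le_one_div_of_le h1 h2
        simp only; linarith
      · ext x
        simp only [Set.mem_iUnion, Set.mem_Iic]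
        constructor
        · intro hx
          have hxc : x < c := lt_of_le_of_ne (le_csSup hb hx) (fun h => hcA (h ▸ hx))
          obtain ⟨n, hn⟩ := exists_nat_one_div_lt (sub_pos.mpr hxc)
          exact ⟨n, by linarith⟩
        · rintro ⟨n, hn⟩
          have hxc : x < c := by
            have : (0:ℝ) < 1 / (n + 1) := by positivity
            linarith
          obtain ⟨a, haA, hxa⟩ := exists_lt_of_lt_csSup hne hxc
          exact hA hxa.le haA
  · refine ⟨fun n => n, fun n m hnm => by simp only; exact_mod_cast hnm, ?_⟩
    ext x
    simp only [Set.mem_iUnion, Set.mem_Iic]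
    constructor
    · intro hx
      obtain ⟨n, hn⟩ := exists_nat_gt x
      exact ⟨n, hn.le⟩
    · rintro ⟨n, hn⟩
      obtain ⟨a, haA, hna⟩ := not_bddAbove_iff.mp hb n
      exact hA (hn.trans hna.le) haA

lemma ennreal_iSup_mul_iSup {a b : ℕ → ENNReal} (ha : Monotone a) (hb : Monotone b) :
    (⨆ n, a n) * ⨆ n, b n = ⨆ n, a n * b n := by
  rw [ENNReal.iSup_mul]
  simp_rw [ENNReal.mul_iSup]
  refine le_antisymm (iSup_le fun n => iSup_le fun m => le_iSup_of_le (max n m)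
    (mul_le_mul' (ha (le_max_left n m)) (hb (le_max_right n m))))
    (iSup_mono fun n => le_iSup (fun m => a n * b m) n)

lemma ennreal_prod_iSup {ι : Type*} (s : Finset ι) (u : ι → ℕ → ENNReal)
    (hu : ∀ i, Monotone (u i)) :
    ∏ i ∈ s, (⨆ n, u i n) = ⨆ n, ∏ i ∈ s, u i n := by
  classical
  induction s using Finset.induction with
  | empty => simp
  | @insert j s hj ih =>
    rw [Finset.prod_insert hj, ih]
    rw [ennreal_iSup_mul_iSup (hu j) (fun n m hnm => Finset.prod_le_prod' fun i _ => hu i hnm)]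
    simp_rw [Finset.prod_insert hj]

lemma plod_lower {Ω : Type*} [MeasurableSpace Ω] (P : Measure Ω) [IsProbabilityMeasure P]
    {d : ℕ} (X : Fin d → Ω → ℝ)
    (h : ∀ t : Fin d → ℝ, ∏ i, P {ω | X i ω ≤ t i} ≤ P {ω | ∀ i, X i ω ≤ t i})
    (A : Fin d → Set ℝ) (hA : ∀ i, IsLowerSet (A i)) :
    ∏ i, P (X i ⁻¹' A i) ≤ P {ω | ∀ i, X i ω ∈ A i} := by
  by_cases hne : ∀ i, (A i).Nonempty
  · choose t ht hAeq using fun i => lowerSet_eq_iUnion_Iic (hA i) (hne i)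
    have hmono : ∀ i, Monotone fun n => {ω | X i ω ≤ t i n} := fun i n m hnm ω hω =>
      le_trans hω (ht i hnm)
    have key1 : ∀ i, P (X i ⁻¹' A i) = ⨆ n, P {ω | X i ω ≤ t i n} := by
      intro i
      have hpre : X i ⁻¹' A i = ⋃ n, {ω | X i ω ≤ t i n} := by
        rw [hAeq i, Set.preimage_iUnion]
        rfl
      rw [hpre, (hmono i).directed_le.measure_iUnion]
    calc ∏ i, P (X i ⁻¹' A i) = ⨆ n, ∏ i, P {ω | X i ω ≤ t i n} := by
          simp_rw [key1]
          exact ennreal_prod_iSup _ _ fun i n m hnm => measure_mono (hmono i hnm)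
      _ ≤ ⨆ n, P {ω | ∀ i, X i ω ≤ t i n} := iSup_mono fun n => h _
      _ ≤ P {ω | ∀ i, X i ω ∈ A i} := iSup_le fun n => measure_mono fun ω hω i => by
          rw [hAeq i]
          exact Set.mem_iUnion.mpr ⟨n, hω i⟩
  · push_neg at hne
    obtain ⟨i, hi⟩ := hne
    have : ∏ i, P (X i ⁻¹' A i) = 0 :=
      Finset.prod_eq_zero (Finset.mem_univ i) (by simp [hi])
    simp [this]

lemma main_enn {Ω : Type*} [MeasurableSpace Ω] (P : Measure Ω) [IsProbabilityMeasure P]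
    {d : ℕ} (X : Fin d → Ω → ℝ) (hX : ∀ i, Measurable (X i))
    (h : ∀ t : Fin d → ℝ, ∏ i, P {ω | X i ω ≤ t i} ≤ P {ω | ∀ i, X i ω ≤ t i})
    (S : Finset (Fin d)) :
    ∀ g : Fin d → ℝ → ENNReal, (∀ i, Measurable (g i)) →
      (∀ i ∈ S, ∃ f : ℝ → ℝ, Antitone f ∧ (∀ x, 0 ≤ f x) ∧ g i = fun x => ENNReal.ofReal (f x)) →
      (∀ i ∉ S, ∃ A : Set ℝ, IsLowerSet A ∧ MeasurableSet A ∧ g i = A.indicator 1) →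
      ∏ i, ∫⁻ ω, g i (X i ω) ∂P ≤ ∫⁻ ω, ∏ i, g i (X i ω) ∂P := by
  classical
  induction S using Finset.induction with
  | empty =>
    intro g hm _ hind
    choose A hAl hAm hAe using fun i => hind i (Finset.notMem_empty i)
    have e1 : ∀ i, ∫⁻ ω, g i (X i ω) ∂P = P (X i ⁻¹' A i) := by
      intro i
      have : (fun ω => g i (X i ω)) = (X i ⁻¹' A i).indicator 1 := by
        funext ω
        rw [hAe i]
        by_cases hω : X i ω ∈ A i <;>
          simp [Set.indicator_apply, hω]
      rw [this, lintegral_indicator_one ((hAm i).preimage (hX i))]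
    have e2 : (fun ω => ∏ i, g i (X i ω)) = ({ω | ∀ i, X i ω ∈ A i}).indicator 1 := by
      funext ω
      by_cases hω : ∀ i, X i ω ∈ A i
      · rw [Set.indicator_of_mem (Set.mem_setOf.mpr hω), Finset.prod_eq_one]
        · rfl
        · intro i _
          rw [hAe i, Set.indicator_of_mem (hω i)]
          rfl
      · rw [Set.indicator_of_notMem (fun hc => hω (Set.mem_setOf.mp hc))]
        push_neg at hω
        obtain ⟨i, hi⟩ := hω
        exact Finset.prod_eq_zero (Finset.mem_univ i)
          (by rw [hAe i, Set.indicator_of_notMem hi])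
    simp_rw [e1]
    rw [e2, lintegral_indicator_one]
    · exact plod_lower P X h A hAl
    · have : {ω | ∀ i, X i ω ∈ A i} = ⋂ i, X i ⁻¹' A i := by ext ω; simp
      rw [this]
      exact MeasurableSet.iInter fun i => (hAm i).preimage (hX i)
  | @insert j S hj ih =>
    intro g hm hrep hind
    obtain ⟨f, hf_anti, hf_nonneg, hf_eq⟩ := hrep j (Finset.mem_insert_self j S)
    have hf_meas : Measurable f := by
      have : f = fun x => (g j x).toReal := by
        funext x; rw [hf_eq]; exact (ENNReal.toReal_ofReal (hf_nonneg x)).symm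
      rw [this]; exact (hm j).ennreal_toReal
    -- the sets
    set W : ℝ → Set Ω := fun s => {ω | 0 < s ∧ s < f (X j ω)} with hW
    have hWmeas : ∀ s, MeasurableSet (W s) := by
      intro s
      by_cases hs : 0 < s
      · have : W s = X j ⁻¹' (f ⁻¹' Set.Ioi s) := by ext ω; simp [hW, hs]
        rw [this]
        exact (hf_meas.comp (hX j)) measurableSet_Ioi
      · have : W s = ∅ := by ext ω; simp [hW, hs]
        rw [this]; exact MeasurableSet.empty
    have hTmeas : MeasurableSet {p : ℝ × Ω | 0 < p.1 ∧ p.1 < f (X j p.2)} :=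
      (measurableSet_lt measurable_const measurable_fst).inter
        (measurableSet_lt measurable_fst ((hf_meas.comp (hX j)).comp measurable_snd))
    have hWP_meas : Measurable fun s => P (W s) := by
      have : (fun s => P (W s)) = fun s =>
          P (Prod.mk s ⁻¹' {p : ℝ × Ω | 0 < p.1 ∧ p.1 < f (X j p.2)}) := rfl
      rw [this]
      exact measurable_measure_prodMk_left hTmeas
    -- the remaining product
    set R : Ω → ENNReal := fun ω => ∏ i ∈ Finset.univ.erase j, g i (X i ω) with hR
    have hRmeas : Measurable R :=
      Finset.measurable_prod _ fun i _ => (hm i).comp (hX i)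
    -- pointwise indicator identity
    have hInd : ∀ (s : ℝ) (ω : Ω), (W s).indicator (1 : Ω → ENNReal) ω = (Set.Ioo 0 (f (X j ω))).indicator (1 : ℝ → ENNReal) s := by
      intro s ω
      by_cases hs : 0 < s ∧ s < f (X j ω) <;>
        simp [Set.indicator_apply, hW, Set.mem_Ioo, hs]
    -- layer cake for g j
    have hlayer : ∀ ω, g j (X j ω) = ∫⁻ s, (W s).indicator 1 ω ∂(volume) := by
      intro ω
      simp_rw [hInd _ ω]
      rw [lintegral_indicator_one measurableSet_Ioo, Real.volume_Ioo, sub_zero, hf_eq]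
    -- the per-s key inequality
    set c : ENNReal := ∏ i ∈ Finset.univ.erase j, ∫⁻ ω, g i (X i ω) ∂P with hc
    have key : ∀ s : ℝ, P (W s) * c ≤ ∫⁻ ω, (W s).indicator 1 ω * R ω ∂P := by
      intro s
      by_cases hs : 0 < s
      · set A : Set ℝ := {y | s < f y} with hA
        have hAl : IsLowerSet A := fun x y hyx hx => lt_of_lt_of_le hx (hf_anti hyx)
        have hAmeas : MeasurableSet A := hf_meas measurableSet_Ioi
        set g' : Fin d → ℝ → ENNReal := Function.update g j (A.indicator 1) with hg'
        have hg'j : g' j = A.indicator 1 := Function.update_self j _ g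
        have hg'ne : ∀ i, i ≠ j → g' i = g i := fun i hi => Function.update_of_ne hi _ g
        have IH := ih g' (fun i => by
            by_cases hij : i = j
            · subst hij; rw [hg'j]; exact measurable_one.indicator hAmeas
            · rw [hg'ne i hij]; exact hm i)
          (fun i hiS => by
            have hij : i ≠ j := fun hh => hj (hh ▸ hiS)
            rw [hg'ne i hij]
            exact hrep i (Finset.mem_insert_of_mem hiS))
          (fun i hiS => by
            by_cases hij : i = j
            · subst hij; exact ⟨A, hAl, hAmeas, hg'j⟩
            · rw [hg'ne i hij]
              exact hind i (fun hmem => (Finset.mem_insert.mp hmem).elim hij hiS))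
        have hWA : W s = X j ⁻¹' A := by ext ω; simp [hW, hA, hs]
        have split_L : ∏ i, ∫⁻ ω, g' i (X i ω) ∂P = P (W s) * c := by
          rw [← Finset.mul_prod_erase Finset.univ _ (Finset.mem_univ j)]
          congr 1
          · rw [hg'j]
            have : (fun ω => A.indicator (1 : ℝ → ENNReal) (X j ω)) = (X j ⁻¹' A).indicator (1 : Ω → ENNReal) := by
              funext ω
              by_cases hω : X j ω ∈ A <;> simp [Set.indicator_apply, hω]
            rw [this, lintegral_indicator_one (hAmeas.preimage (hX j)), hWA]
          · exact Finset.prod_congr rfl fun i hi => by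
              rw [hg'ne i (Finset.mem_erase.mp hi).1]
        have split_R : ∀ ω, ∏ i, g' i (X i ω) = (W s).indicator 1 ω * R ω := by
          intro ω
          rw [← Finset.mul_prod_erase Finset.univ _ (Finset.mem_univ j)]
          congr 1
          · rw [hg'j, hWA]
            by_cases hω : X j ω ∈ A <;> simp [Set.indicator_apply, hω]
          · exact Finset.prod_congr rfl fun i hi => by
              rw [hg'ne i (Finset.mem_erase.mp hi).1]
        calc P (W s) * c = ∏ i, ∫⁻ ω, g' i (X i ω) ∂P := split_L.symm
          _ ≤ ∫⁻ ω, ∏ i, g' i (X i ω) ∂P := IH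
          _ = ∫⁻ ω, (W s).indicator 1 ω * R ω ∂P := by simp_rw [split_R]
      · have : W s = ∅ := by ext ω; simp [hW, hs]
        rw [this]
        simp
    -- measurability of the big uncurried function
    have hbig : Measurable fun p : ℝ × Ω => (W p.1).indicator (1 : Ω → ENNReal) p.2 * R p.2 := by
      have h1 : (fun p : ℝ × Ω => (W p.1).indicator (1 : Ω → ENNReal) p.2) =
          ({p : ℝ × Ω | 0 < p.1 ∧ p.1 < f (X j p.2)}).indicator 1 := by
        funext p
        by_cases hp : 0 < p.1 ∧ p.1 < f (X j p.2) <;>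
          simp [Set.indicator_apply, hW, hp]
      exact (h1 ▸ measurable_one.indicator hTmeas).mul (hRmeas.comp measurable_snd)
    -- main chain
    calc ∏ i, ∫⁻ ω, g i (X i ω) ∂P
        = (∫⁻ ω, g j (X j ω) ∂P) * c := by
          rw [← Finset.mul_prod_erase Finset.univ _ (Finset.mem_univ j)]
      _ = (∫⁻ s, P (W s) ∂(volume)) * c := by
          congr 1
          simp_rw [hlayer]
          have hT2 : MeasurableSet {p : Ω × ℝ | 0 < p.2 ∧ p.2 < f (X j p.1)} :=
            (measurableSet_lt measurable_const measurable_snd).inter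
              (measurableSet_lt measurable_snd ((hf_meas.comp (hX j)).comp measurable_fst))
          have huncurry : (Function.uncurry fun ω s =>
              (Set.Ioo 0 (f (X j ω))).indicator (1 : ℝ → ENNReal) s) =
              ({p : Ω × ℝ | 0 < p.2 ∧ p.2 < f (X j p.1)}).indicator 1 := by
            funext p
            by_cases hp : 0 < p.2 ∧ p.2 < f (X j p.1) <;>
              simp [Function.uncurry, Set.indicator_apply, Set.mem_Ioo, hp]
          rw [show (fun ω => ∫⁻ s, (W s).indicator (1 : Ω → ENNReal) ω ∂volume) =
              fun ω => ∫⁻ s, (Set.Ioo 0 (f (X j ω))).indicator (1 : ℝ → ENNReal) s ∂volume from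
              funext fun ω => by simp_rw [hInd _ ω]] at *
          rw [lintegral_lintegral_swap (huncurry ▸ (measurable_one.indicator hT2)).aemeasurable]
          refine lintegral_congr fun s => ?_
          have : (fun ω => (Set.Ioo 0 (f (X j ω))).indicator (1 : ℝ → ENNReal) s) =
              (W s).indicator (1 : Ω → ENNReal) := by
            funext ω; rw [hInd]
          rw [this, lintegral_indicator_one (hWmeas s)]
      _ = ∫⁻ s, P (W s) * c ∂(volume) := (lintegral_mul_const c hWP_meas).symm
      _ ≤ ∫⁻ s, ∫⁻ ω, (W s).indicator 1 ω * R ω ∂P ∂(volume) := lintegral_mono key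
      _ = ∫⁻ ω, ∫⁻ s, (W s).indicator 1 ω * R ω ∂(volume) ∂P := by
          rw [lintegral_lintegral_swap hbig.aemeasurable]
      _ = ∫⁻ ω, ∏ i, g i (X i ω) ∂P := by
          refine lintegral_congr fun ω => ?_
          simp_rw [hInd _ ω]
          rw [lintegral_mul_const _ (measurable_one.indicator measurableSet_Ioo),
            lintegral_indicator_one measurableSet_Ioo, Real.volume_Ioo, sub_zero,
            ← Finset.mul_prod_erase Finset.univ (fun i => g i (X i ω)) (Finset.mem_univ j),
            hf_eq]

/-- `X` is positive lower orthant dependent if and only if for all bounded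
measurable nonincreasing nonnegative `fᵢ : ℝ → ℝ`,
`E (∏ᵢ fᵢ(Xᵢ)) ≥ ∏ᵢ E fᵢ(Xᵢ)`. -/
theorem PLOD_iff_product_of_nonincreasing
    {Ω : Type*} [MeasurableSpace Ω] (P : Measure Ω) [IsProbabilityMeasure P]
    (d : ℕ) (X : Fin d → Ω → ℝ) (hX : ∀ i, Measurable (X i)) :
    (∀ t : Fin d → ℝ, ∏ i, P {ω | X i ω ≤ t i} ≤ P {ω | ∀ i, X i ω ≤ t i}) ↔
      (∀ f : Fin d → ℝ → ℝ, (∀ i, Measurable (f i)) → (∀ i, Antitone (f i)) →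
        (∀ i, ∃ C, ∀ x, |f i x| ≤ C) → (∀ i x, 0 ≤ f i x) →
        ∏ i, ∫ ω, f i (X i ω) ∂P ≤ ∫ ω, ∏ i, f i (X i ω) ∂P) := by
  constructor
  · intro h f hm ha hb h0
    choose C hC using hb
    have hEN := main_enn P X hX h Finset.univ
      (fun i x => ENNReal.ofReal (f i x))
      (fun i => ENNReal.measurable_ofReal.comp (hm i))
      (fun i _ => ⟨f i, ha i, h0 i, rfl⟩)
      (fun i hi => absurd (Finset.mem_univ i) hi)
    -- finiteness of the RHS lintegral
    have hfin : ∫⁻ ω, ∏ i, ENNReal.ofReal (f i (X i ω)) ∂P ≠ ⊤ := by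
      have hb' : ∀ ω, ∏ i, ENNReal.ofReal (f i (X i ω)) ≤ ∏ i, ENNReal.ofReal (C i) :=
        fun ω => Finset.prod_le_prod' fun i _ =>
          ENNReal.ofReal_le_ofReal ((le_abs_self _).trans (hC i (X i ω)))
      refine ne_top_of_le_ne_top ?_ ((lintegral_mono hb').trans_eq (lintegral_const _))
      simp only [measure_univ, mul_one]
      exact ENNReal.prod_ne_top fun i _ => ENNReal.ofReal_ne_top
    -- convert Bochner integrals to lintegrals
    have e1 : ∀ i, ∫ ω, f i (X i ω) ∂P =
        (∫⁻ ω, ENNReal.ofReal (f i (X i ω)) ∂P).toReal := fun i =>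
      integral_eq_lintegral_of_nonneg_ae (Filter.Eventually.of_forall fun ω => h0 i (X i ω))
        ((hm i).comp (hX i)).aestronglyMeasurable
    have e2 : ∫ ω, ∏ i, f i (X i ω) ∂P =
        (∫⁻ ω, ∏ i, ENNReal.ofReal (f i (X i ω)) ∂P).toReal := by
      rw [integral_eq_lintegral_of_nonneg_ae
        (Filter.Eventually.of_forall fun ω => Finset.prod_nonneg fun i _ => h0 i (X i ω))
        (Finset.measurable_prod _ fun i _ => (hm i).comp (hX i)).aestronglyMeasurable]
      congr 1
      exact lintegral_congr fun ω =>
        (ENNReal.ofReal_prod_of_nonneg fun i _ => h0 i (X i ω))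
    simp_rw [e1, e2, ← ENNReal.toReal_prod]
    exact ENNReal.toReal_mono hfin hEN
  · intro h t
    set f : Fin d → ℝ → ℝ := fun i => (Set.Iic (t i)).indicator 1 with hf
    have hmem : ∀ i x, f i x = if x ≤ t i then 1 else 0 := by
      intro i x
      simp [hf, Set.indicator_apply, Set.mem_Iic]
    have key := h f
      (fun i => measurable_one.indicator measurableSet_Iic)
      (fun i x y hxy => by
        rw [hmem, hmem]
        by_cases hy : y ≤ t i
        · rw [if_pos hy, if_pos (hxy.trans hy)]
        · rw [if_neg hy]
          by_cases hx : x ≤ t i <;> simp [hx])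
      (fun i => ⟨1, fun x => by rw [hmem]; split <;> simp⟩)
      (fun i x => by rw [hmem]; split <;> simp)
    have e1 : ∀ i, ∫ ω, f i (X i ω) ∂P = (P {ω | X i ω ≤ t i}).toReal := by
      intro i
      have : (fun ω => f i (X i ω)) = ({ω | X i ω ≤ t i}).indicator 1 := by
        funext ω
        rw [hmem]
        by_cases hω : X i ω ≤ t i <;> simp [Set.indicator_apply, hω]
      rw [this, integral_indicator_one (measurableSet_le (hX i) measurable_const)]
      rfl
    have e2 : ∫ ω, ∏ i, f i (X i ω) ∂P = (P {ω | ∀ i, X i ω ≤ t i}).toReal := by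
      have : (fun ω => ∏ i, f i (X i ω)) = ({ω | ∀ i, X i ω ≤ t i}).indicator 1 := by
        funext ω
        by_cases hω : ∀ i, X i ω ≤ t i
        · rw [Set.indicator_of_mem (Set.mem_setOf.mpr hω), Finset.prod_eq_one]
          · rfl
          · intro i _
            rw [hmem, if_pos (hω i)]
        · rw [Set.indicator_of_notMem (fun hc => hω (Set.mem_setOf.mp hc))]
          push_neg at hω
          obtain ⟨i, hi⟩ := hω
          exact Finset.prod_eq_zero (Finset.mem_univ i) (by rw [hmem, if_neg (not_le.mpr hi)])
      rw [this, integral_indicator_one]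
      rfl
      have : {ω | ∀ i, X i ω ≤ t i} = ⋂ i, {ω | X i ω ≤ t i} := by ext ω; simp
      rw [this]
      exact MeasurableSet.iInter fun i => measurableSet_le (hX i) measurable_const
    rw [e2] at key
    simp_rw [e1, ← ENNReal.toReal_prod] at key
    exact (ENNReal.toReal_le_toReal
      (ENNReal.prod_ne_top fun i _ => measure_ne_top P _) (measure_ne_top P _)).mp key
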